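/- Let $(d_k) \subset [0,\infty)$, $(\nu_k) \subset [0,\infty)$, and $(\sigma_k) \subset [0,\infty)$ with $\sigma_k \to 0$. Assume $d_{k+1} \le d_k + \sigma_k - \nu_k$ for all $k \ge 1$, and that whenever $\nu_{n_k} \to 0$ along some subsequence $(n_k)$, the corresponding subsequence $d_{n_k} \to 0$. Then $d_k \to 0$. -/
import Mathlib


open Filter

theorem stmt8 (d ν σ : ℕ → ℝ)
    (hd : ∀ k, 0 ≤ d k) (hν : ∀ k, 0 ≤ ν k) (hσ : ∀ k, 0 ≤ σ k)
    (hσ0 : Tendsto σ atTop (nhds 0))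
    (hrec : ∀ k ≥ 1, d (k + 1) ≤ d k + σ k - ν k)
    (himp : ∀ φ : ℕ → ℕ, StrictMono φ →
      Tendsto (ν ∘ φ) atTop (nhds 0) → Tendsto (d ∘ φ) atTop (nhds 0)) :
    Tendsto d atTop (nhds 0) := by
  have hσsmall : ∀ δ : ℝ, 0 < δ → ∀ᶠ k in atTop, σ k < δ := by
    intro δ hδ
    filter_upwards [(NormedAddCommGroup.tendsto_nhds_zero.mp hσ0) δ hδ] with k hk
    rwa [Real.norm_of_nonneg (hσ k)] at hk
  -- Step A : ν is frequently small
  have stepA : ∀ δ : ℝ, 0 < δ → ∃ᶠ k in atTop, ν k < δ := by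
    intro δ hδ
    by_contra h
    rw [not_frequently] at h
    have h2 : ∀ᶠ k in atTop, δ ≤ ν k := by
      filter_upwards [h] with k hk; exact not_lt.mp hk
    obtain ⟨N, hN⟩ := eventually_atTop.mp
      ((h2.and ((hσsmall (δ / 2) (by linarith)).and (eventually_ge_atTop 1))))
    have key : ∀ n : ℕ, d (N + n) ≤ d N - n * (δ / 2) := by
      intro n
      induction n with
      | zero => simp
      | succ n ih =>
        have hk := hN (N + n) (Nat.le_add_right _ _)
        have hr := hrec (N + n) hk.2.2
        have : d (N + n + 1) ≤ d (N + n) + σ (N + n) - ν (N + n) := hr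
        show d (N + n + 1) ≤ d N - (↑(n + 1)) * (δ / 2)
        push_cast
        nlinarith [hk.1, hk.2.1]
    obtain ⟨n, hn⟩ := exists_nat_gt (d N / (δ / 2))
    have hδ2 : (0 : ℝ) < δ / 2 := by linarith
    have : d N < n * (δ / 2) := by
      rwa [div_lt_iff₀ hδ2] at hn
    have := key n
    have := hd (N + n)
    linarith
  -- Step B : d is frequently small
  have stepB : ∀ ε : ℝ, 0 < ε → ∃ᶠ k in atTop, d k < ε := by
    intro ε hε
    obtain ⟨φ, hφ, hφν⟩ := extraction_forall_of_frequently
      (fun n : ℕ => stepA (1 / (n + 1)) (by positivity))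
    have hν0 : Tendsto (ν ∘ φ) atTop (nhds 0) :=
      squeeze_zero (fun n => hν _) (fun n => (hφν n).le)
        tendsto_one_div_add_atTop_nhds_zero_nat
    have hd0 := himp φ hφ hν0
    have hev : ∀ᶠ n in atTop, d (φ n) < ε := by
      filter_upwards [(NormedAddCommGroup.tendsto_nhds_zero.mp hd0) ε hε] with n hn
      have : ‖d (φ n)‖ < ε := hn
      rwa [Real.norm_of_nonneg (hd _)] at this
    exact hφ.tendsto_atTop.frequently hev.frequently
  rw [NormedAddCommGroup.tendsto_nhds_zero]
  intro ε hε
  have main : ∀ᶠ k in atTop, d k < ε := by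
    by_contra hcon
    rw [not_eventually] at hcon
    have hfreq : ∃ᶠ k in atTop, ε ≤ d k := hcon.mono fun k hk => not_lt.mp hk
    -- Step C : eventually, d j ≥ ε/2 forces ν j ≥ δ
    have hC : ∃ δ : ℝ, 0 < δ ∧ ∃ N, ∀ j ≥ N, ε / 2 ≤ d j → δ ≤ ν j := by
      by_contra hC
      push_neg at hC
      have hfr : ∀ n : ℕ, ∃ᶠ j in atTop, ε / 2 ≤ d j ∧ ν j < 1 / (n + 1) := by
        intro n
        rw [frequently_atTop]
        intro a
        obtain ⟨j, hj, h1, h2⟩ := hC (1 / (n + 1)) (by positivity) a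
        exact ⟨j, hj, h1, h2⟩
      obtain ⟨φ, hφ, hP⟩ := extraction_forall_of_frequently hfr
      have hν0 : Tendsto (ν ∘ φ) atTop (nhds 0) :=
        squeeze_zero (fun n => hν _) (fun n => (hP n).2.le)
          tendsto_one_div_add_atTop_nhds_zero_nat
      have hd0 := himp φ hφ hν0
      obtain ⟨n, hn⟩ :=
        ((NormedAddCommGroup.tendsto_nhds_zero.mp hd0) (ε / 2) (by linarith)).exists
      have hn' : ‖d (φ n)‖ < ε / 2 := hn
      rw [Real.norm_of_nonneg (hd _)] at hn'
      exact absurd (hP n).1 (not_le.mpr hn')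
    obtain ⟨δ, hδ, N, hN⟩ := hC
    obtain ⟨N₁, hN₁⟩ := eventually_atTop.mp
      ((hσsmall (min (δ / 2) (ε / 4)) (by positivity)).and
        (eventually_ge_atTop (max N 1)))
    obtain ⟨m, hmN₁, hm⟩ := frequently_atTop.mp (stepB (ε / 2) (by linarith)) N₁
    -- invariant : after m, d stays below 3ε/4
    have inv : ∀ k, m ≤ k → d k < 3 / 4 * ε := by
      intro k hk
      induction k with
      | zero =>
        have : m = 0 := Nat.le_zero.mp hk
        rw [← this]; linarith
      | succ k ih =>
        rcases eq_or_lt_of_le hk with h | h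
        · rw [← h]; linarith
        · have hmk : m ≤ k := Nat.lt_succ_iff.mp h
          have ihk := ih hmk
          have hkN₁ : N₁ ≤ k := le_trans hmN₁ hmk
          have hσk : σ k < min (δ / 2) (ε / 4) := (hN₁ k hkN₁).1
          have hmax : max N 1 ≤ k := (hN₁ k hkN₁).2
          have hkN : N ≤ k := le_trans (le_max_left _ _) hmax
          have hk1 : 1 ≤ k := le_trans (le_max_right _ _) hmax
          have hr := hrec k hk1
          have hσk1 : σ k < δ / 2 := lt_of_lt_of_le hσk (min_le_left _ _)
          have hσk2 : σ k < ε / 4 := lt_of_lt_of_le hσk (min_le_right _ _)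
          by_cases hcase : ε / 2 ≤ d k
          · have hνk := hN k hkN hcase
            linarith
          · push_neg at hcase
            have := hν k
            linarith
    obtain ⟨k, hkm, hk⟩ := frequently_atTop.mp hfreq m
    have := inv k hkm
    linarith
  filter_upwards [main] with k hk
  rw [Real.norm_of_nonneg (hd k)]
  exact hk
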